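/- Let P and Q be posets. If the set of non-trivial ideals of P and the set of non-trivial ideals of Q are both countable, then the Scott topology on the product poset P × Q coincides with the product topology of the Scott spaces of P and Q. -/

import Mathlib

/-- An ideal of a poset: a nonempty, directed lower set.  It is *non-trivial*
if it contains no maximum element. -/
def NontrivialIdeal {P : Type*} [Preorder P] (I : Set P) : Prop :=
  I.Nonempty ∧ DirectedOn (· ≤ ·) I ∧ IsLowerSet I ∧ ¬ ∃ m ∈ I, ∀ x ∈ I, x ≤ m

open Set

attribute [local instance] Classical.propDecidable

set_option linter.unusedSectionVars false

lemma scottOpen_iff' {α : Type*} [Preorder α] {s : Set α} :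
    @IsOpen α (Topology.scott α Set.univ) s ↔ IsUpperSet s ∧ DirSupInacc s := by
  letI := Topology.scott α Set.univ
  haveI : Topology.IsScott α Set.univ := ⟨rfl⟩
  rw [Topology.IsScott.isOpen_iff_isUpperSet_and_dirSupInaccOn (D := Set.univ),
    dirSupInaccOn_univ]

section compat
variable {P Q : Type*} [Preorder P] [Preorder Q] {U : Set (P × Q)}

lemma isLUB_slice_left' {I : Set P} (hne : I.Nonempty) {s : P} (hs : IsLUB I s) (q : Q) :
    IsLUB ((fun x => (x, q)) '' I) (s, q) := by
  constructor
  · rintro ⟨x, y⟩ ⟨x', hx', h⟩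
    cases h
    exact ⟨hs.1 hx', le_rfl⟩
  · rintro ⟨u, v⟩ hu
    obtain ⟨x0, hx0⟩ := hne
    have h0 := hu ⟨x0, hx0, rfl⟩
    refine ⟨hs.2 fun x hx => (hu ⟨x, hx, rfl⟩).1, h0.2⟩

lemma exists_compat_left' (hup : IsUpperSet U) (hin : DirSupInacc U) {I : Set P}
    (hne : I.Nonempty) (hdir : DirectedOn (· ≤ ·) I) {s : P} (hs : IsLUB I s)
    (L : List Q) (hL : ∀ q ∈ L, (s, q) ∈ U) : ∃ x, x ∈ I ∧ ∀ q ∈ L, (x, q) ∈ U := by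
  induction L with
  | nil => exact ⟨hne.choose, hne.choose_spec, by simp⟩
  | cons q L ih =>
    obtain ⟨x0, hx0, hx0L⟩ := ih fun q' hq' => hL q' (List.mem_cons_of_mem _ hq')
    have hd : DirectedOn (· ≤ ·) ((fun x => (x, q)) '' I) := by
      rintro _ ⟨x, hx, rfl⟩ _ ⟨y, hy, rfl⟩
      obtain ⟨z, hz, hxz, hyz⟩ := hdir x hx y hy
      exact ⟨(z, q), ⟨z, hz, rfl⟩, ⟨hxz, le_rfl⟩, ⟨hyz, le_rfl⟩⟩
    obtain ⟨_, ⟨x1, hx1, rfl⟩, hx1U⟩ :=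
      hin (hne.image _) hd (isLUB_slice_left' hne hs q) (hL q (List.mem_cons_self))
    obtain ⟨x, hx, hx0x, hx1x⟩ := hdir x0 hx0 x1 hx1
    refine ⟨x, hx, fun q' hq' => ?_⟩
    rcases List.mem_cons.1 hq' with rfl | hq'
    · exact hup (Prod.mk_le_mk.2 ⟨hx1x, le_rfl⟩) hx1U
    · exact hup (Prod.mk_le_mk.2 ⟨hx0x, le_rfl⟩) (hx0L q' hq')

lemma isLUB_slice_right' {J : Set Q} (hne : J.Nonempty) {t : Q} (ht : IsLUB J t) (p : P) :
    IsLUB ((fun y => (p, y)) '' J) (p, t) := by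
  constructor
  · rintro ⟨x, y⟩ ⟨y', hy', h⟩
    cases h
    exact ⟨le_rfl, ht.1 hy'⟩
  · rintro ⟨u, v⟩ hu
    obtain ⟨y0, hy0⟩ := hne
    have h0 := hu ⟨y0, hy0, rfl⟩
    exact ⟨h0.1, ht.2 fun y hy => (hu ⟨y, hy, rfl⟩).2⟩

lemma exists_compat_right' (hup : IsUpperSet U) (hin : DirSupInacc U) {J : Set Q}
    (hne : J.Nonempty) (hdir : DirectedOn (· ≤ ·) J) {t : Q} (ht : IsLUB J t)
    (L : List P) (hL : ∀ p ∈ L, (p, t) ∈ U) : ∃ y, y ∈ J ∧ ∀ p ∈ L, (p, y) ∈ U := by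
  induction L with
  | nil => exact ⟨hne.choose, hne.choose_spec, by simp⟩
  | cons p L ih =>
    obtain ⟨y0, hy0, hy0L⟩ := ih fun p' hp' => hL p' (List.mem_cons_of_mem _ hp')
    have hd : DirectedOn (· ≤ ·) ((fun y => (p, y)) '' J) := by
      rintro _ ⟨x, hx, rfl⟩ _ ⟨y, hy, rfl⟩
      obtain ⟨z, hz, hxz, hyz⟩ := hdir x hx y hy
      exact ⟨(p, z), ⟨z, hz, rfl⟩, ⟨le_rfl, hxz⟩, ⟨le_rfl, hyz⟩⟩
    obtain ⟨_, ⟨y1, hy1, rfl⟩, hy1U⟩ :=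
      hin (hne.image _) hd (isLUB_slice_right' hne ht p) (hL p (List.mem_cons_self))
    obtain ⟨y, hy, hy0y, hy1y⟩ := hdir y0 hy0 y1 hy1
    refine ⟨y, hy, fun p' hp' => ?_⟩
    rcases List.mem_cons.1 hp' with rfl | hp'
    · exact hup (Prod.mk_le_mk.2 ⟨le_rfl, hy1y⟩) hy1U
    · exact hup (Prod.mk_le_mk.2 ⟨le_rfl, hy0y⟩) (hy0L p' hp')

end compat

noncomputable section construction
variable {P Q : Type*} [Preorder P] [Preorder Q]

/-- Add a point of `I` compatible with all current right generators, if possible. -/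
def stepP (U : Set (P × Q)) (I : Set P) (L : List P × List Q) : List P × List Q :=
  if h : ∃ x, x ∈ I ∧ ∀ q ∈ L.2, (x, q) ∈ U then (h.choose :: L.1, L.2) else L

def stepQ (U : Set (P × Q)) (J : Set Q) (L : List P × List Q) : List P × List Q :=
  if h : ∃ y, y ∈ J ∧ ∀ p ∈ L.1, (p, y) ∈ U then (L.1, h.choose :: L.2) else L

/-- The generator lists at stage `n`. -/
def SS (fP : ℕ → Set P) (fQ : ℕ → Set Q) (U : Set (P × Q)) (a : P) (b : Q) :
    ℕ → List P × List Q
  | 0 => ([a], [b])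
  | n + 1 =>
      stepQ U (fQ (Nat.unpair n).1) (stepP U (fP (Nat.unpair n).1) (SS fP fQ U a b n))

variable {U : Set (P × Q)} {I : Set P} {J : Set Q} {L : List P × List Q}

lemma stepP_snd : (stepP U I L).2 = L.2 := by
  unfold stepP; split <;> rfl

lemma stepQ_fst : (stepQ U J L).1 = L.1 := by
  unfold stepQ; split <;> rfl

lemma stepP_fst_subset : ∀ p ∈ L.1, p ∈ (stepP U I L).1 := by
  unfold stepP; split
  · exact fun p hp => List.mem_cons_of_mem _ hp
  · exact fun p hp => hp

lemma stepQ_snd_subset : ∀ q ∈ L.2, q ∈ (stepQ U J L).2 := by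
  unfold stepQ; split
  · exact fun q hq => List.mem_cons_of_mem _ hq
  · exact fun q hq => hq

lemma stepP_inv (hL : ∀ p ∈ L.1, ∀ q ∈ L.2, (p, q) ∈ U) :
    ∀ p ∈ (stepP U I L).1, ∀ q ∈ (stepP U I L).2, (p, q) ∈ U := by
  unfold stepP; split
  · rename_i h
    intro p hp q hq
    rcases List.mem_cons.1 hp with rfl | hp
    · exact h.choose_spec.2 q hq
    · exact hL p hp q hq
  · exact hL

lemma stepQ_inv (hL : ∀ p ∈ L.1, ∀ q ∈ L.2, (p, q) ∈ U) :
    ∀ p ∈ (stepQ U J L).1, ∀ q ∈ (stepQ U J L).2, (p, q) ∈ U := by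
  unfold stepQ; split
  · rename_i h
    intro p hp q hq
    rcases List.mem_cons.1 hq with rfl | hq
    · exact h.choose_spec.2 p hp
    · exact hL p hp q hq
  · exact hL

lemma stepP_hit (h : ∃ x, x ∈ I ∧ ∀ q ∈ L.2, (x, q) ∈ U) :
    ∃ x, x ∈ I ∧ x ∈ (stepP U I L).1 := by
  unfold stepP
  rw [dif_pos h]
  exact ⟨h.choose, h.choose_spec.1, List.mem_cons_self⟩

lemma stepQ_hit (h : ∃ y, y ∈ J ∧ ∀ p ∈ L.1, (p, y) ∈ U) :
    ∃ y, y ∈ J ∧ y ∈ (stepQ U J L).2 := by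
  unfold stepQ
  rw [dif_pos h]
  exact ⟨h.choose, h.choose_spec.1, List.mem_cons_self⟩

variable {fP : ℕ → Set P} {fQ : ℕ → Set Q} {a : P} {b : Q}

lemma SS_inv (hab : (a, b) ∈ U) (n : ℕ) :
    ∀ p ∈ (SS fP fQ U a b n).1, ∀ q ∈ (SS fP fQ U a b n).2, (p, q) ∈ U := by
  induction n with
  | zero =>
    intro p hp q hq
    simp only [SS, List.mem_singleton] at hp hq
    subst hp; subst hq; exact hab
  | succ n ih => exact stepQ_inv (stepP_inv ih)

lemma SS_fst_mono {m n : ℕ} (h : m ≤ n) :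
    ∀ p ∈ (SS fP fQ U a b m).1, p ∈ (SS fP fQ U a b n).1 := by
  induction n with
  | zero => obtain rfl : m = 0 := Nat.le_zero.1 h; exact fun p hp => hp
  | succ n ih =>
    rcases Nat.le_succ_iff.1 h with h' | rfl
    · intro p hp
      have := ih h' p hp
      rw [SS, stepQ_fst]
      exact stepP_fst_subset p this
    · exact fun p hp => hp

lemma SS_snd_mono {m n : ℕ} (h : m ≤ n) :
    ∀ q ∈ (SS fP fQ U a b m).2, q ∈ (SS fP fQ U a b n).2 := by
  induction n with
  | zero => obtain rfl : m = 0 := Nat.le_zero.1 h; exact fun q hq => hq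
  | succ n ih =>
    rcases Nat.le_succ_iff.1 h with h' | rfl
    · intro q hq
      have := ih h' q hq
      rw [SS]
      exact stepQ_snd_subset q (by rw [stepP_snd]; exact this)
    · exact fun q hq => hq

end construction

/-- Key separation lemma: any point of a Scott-open set of the product is contained in an
open box inside it, provided both posets have countably many non-trivial ideals. -/
lemma key_lemma {P Q : Type*} [PartialOrder P] [PartialOrder Q]
    (hP : {I : Set P | NontrivialIdeal I}.Countable)
    (hQ : {I : Set Q | NontrivialIdeal I}.Countable)
    {U : Set (P × Q)} (hup : IsUpperSet U) (hin : DirSupInacc U)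
    {a : P} {b : Q} (hab : (a, b) ∈ U) :
    ∃ V W, (IsUpperSet V ∧ DirSupInacc V) ∧ (IsUpperSet W ∧ DirSupInacc W) ∧
      a ∈ V ∧ b ∈ W ∧ V ×ˢ W ⊆ U := by
  obtain ⟨fP, hfP⟩ := (hP.insert ∅).exists_eq_range ⟨∅, mem_insert _ _⟩
  obtain ⟨fQ, hfQ⟩ := (hQ.insert ∅).exists_eq_range ⟨∅, mem_insert _ _⟩
  have hfP' : ∀ I : Set P, NontrivialIdeal I → ∃ i, fP i = I := by
    intro I hI
    have : I ∈ insert ∅ {I : Set P | NontrivialIdeal I} := mem_insert_of_mem _ hI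
    rw [hfP] at this
    obtain ⟨i, hi⟩ := this
    exact ⟨i, hi⟩
  have hfQ' : ∀ J : Set Q, NontrivialIdeal J → ∃ i, fQ i = J := by
    intro J hJ
    have : J ∈ insert ∅ {J : Set Q | NontrivialIdeal J} := mem_insert_of_mem _ hJ
    rw [hfQ] at this
    obtain ⟨i, hi⟩ := this
    exact ⟨i, hi⟩
  set S := SS fP fQ U a b with hS
  set V : Set P := {x | ∃ n, ∃ p ∈ (S n).1, p ≤ x} with hV
  set W : Set Q := {y | ∃ n, ∃ q ∈ (S n).2, q ≤ y} with hW
  have hVup : IsUpperSet V := by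
    rintro x x' hxx' ⟨n, p, hp, hpx⟩
    exact ⟨n, p, hp, hpx.trans hxx'⟩
  have hWup : IsUpperSet W := by
    rintro y y' hyy' ⟨n, q, hq, hqy⟩
    exact ⟨n, q, hq, hqy.trans hyy'⟩
  have haV : a ∈ V := ⟨0, a, by simp [hS, SS], le_rfl⟩
  have hbW : b ∈ W := ⟨0, b, by simp [hS, SS], le_rfl⟩
  have hVW : V ×ˢ W ⊆ U := by
    rintro ⟨x, y⟩ ⟨⟨m, p, hp, hpx⟩, ⟨n, q, hq, hqy⟩⟩
    have hp' : p ∈ (S (max m n)).1 := SS_fst_mono (le_max_left m n) p hp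
    have hq' : q ∈ (S (max m n)).2 := SS_snd_mono (le_max_right m n) q hq
    exact hup (Prod.mk_le_mk.2 ⟨hpx, hqy⟩) (SS_inv hab (max m n) p hp' q hq')
  refine ⟨V, W, ⟨hVup, ?_⟩, ⟨hWup, ?_⟩, haV, hbW, hVW⟩
  · -- DirSupInacc V
    intro d hd0 hdd s hlub hsV
    by_cases hsd : s ∈ d
    · exact ⟨s, hsd, hsV⟩
    set I : Set P := {x | ∃ y ∈ d, x ≤ y} with hI
    have hIne : I.Nonempty := ⟨hd0.choose, hd0.choose, hd0.choose_spec, le_rfl⟩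
    have hIdir : DirectedOn (· ≤ ·) I := by
      rintro x ⟨y, hy, hxy⟩ x' ⟨y', hy', hx'y'⟩
      obtain ⟨z, hz, hyz, hy'z⟩ := hdd y hy y' hy'
      exact ⟨z, ⟨z, hz, le_rfl⟩, hxy.trans hyz, hx'y'.trans hy'z⟩
    have hIlow : IsLowerSet I := by
      rintro u v hvu ⟨y, hy, huy⟩
      exact ⟨y, hy, hvu.trans huy⟩
    have hIlub : IsLUB I s := by
      constructor
      · rintro x ⟨y, hy, hxy⟩
        exact hxy.trans (hlub.1 hy)
      · intro u hu
        exact hlub.2 fun y hy => hu ⟨y, hy, le_rfl⟩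
    have hnomax : ¬ ∃ m ∈ I, ∀ x ∈ I, x ≤ m := by
      rintro ⟨m0, ⟨y0, hy0, hm0y0⟩, hmax⟩
      have hub : ∀ y ∈ d, y ≤ y0 := fun y hy => (hmax y ⟨y, hy, le_rfl⟩).trans hm0y0
      have h1 : s ≤ y0 := hlub.2 hub
      have h2 : y0 ≤ s := hlub.1 hy0
      exact hsd (le_antisymm h2 h1 ▸ hy0)
    obtain ⟨i, hi⟩ := hfP' I ⟨hIne, hIdir, hIlow, hnomax⟩
    obtain ⟨n, p, hp, hps⟩ := hsV
    set m := Nat.pair i n with hm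
    have hnm : n ≤ m := Nat.right_le_pair i n
    have hcond : ∃ x, x ∈ fP i ∧ ∀ q ∈ (S m).2, (x, q) ∈ U := by
      rw [hi]
      refine exists_compat_left' hup hin hIne hIdir hIlub _ fun q hq => ?_
      have hp' : p ∈ (S m).1 := SS_fst_mono hnm p hp
      exact hup (Prod.mk_le_mk.2 ⟨hps, le_rfl⟩) (SS_inv hab m p hp' q hq)
    obtain ⟨x, hxI, hxmem⟩ := stepP_hit hcond
    have hxS : x ∈ (S (m + 1)).1 := by
      have : S (m + 1) = stepQ U (fQ (Nat.unpair m).1)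
          (stepP U (fP (Nat.unpair m).1) (S m)) := rfl
      rw [this, stepQ_fst, hm, Nat.unpair_pair]
      exact hxmem
    rw [hi] at hxI
    obtain ⟨y, hyd, hxy⟩ := hxI
    exact ⟨y, hyd, hVup hxy ⟨m + 1, x, hxS, le_rfl⟩⟩
  · -- DirSupInacc W
    intro d hd0 hdd t hlub htW
    by_cases htd : t ∈ d
    · exact ⟨t, htd, htW⟩
    set J : Set Q := {y | ∃ z ∈ d, y ≤ z} with hJ
    have hJne : J.Nonempty := ⟨hd0.choose, hd0.choose, hd0.choose_spec, le_rfl⟩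
    have hJdir : DirectedOn (· ≤ ·) J := by
      rintro x ⟨y, hy, hxy⟩ x' ⟨y', hy', hx'y'⟩
      obtain ⟨z, hz, hyz, hy'z⟩ := hdd y hy y' hy'
      exact ⟨z, ⟨z, hz, le_rfl⟩, hxy.trans hyz, hx'y'.trans hy'z⟩
    have hJlow : IsLowerSet J := by
      rintro u v hvu ⟨y, hy, huy⟩
      exact ⟨y, hy, hvu.trans huy⟩
    have hJlub : IsLUB J t := by
      constructor
      · rintro x ⟨y, hy, hxy⟩
        exact hxy.trans (hlub.1 hy)
      · intro u hu
        exact hlub.2 fun y hy => hu ⟨y, hy, le_rfl⟩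
    have hnomax : ¬ ∃ m ∈ J, ∀ x ∈ J, x ≤ m := by
      rintro ⟨m0, ⟨y0, hy0, hm0y0⟩, hmax⟩
      have hub : ∀ y ∈ d, y ≤ y0 := fun y hy => (hmax y ⟨y, hy, le_rfl⟩).trans hm0y0
      have h1 : t ≤ y0 := hlub.2 hub
      have h2 : y0 ≤ t := hlub.1 hy0
      exact htd (le_antisymm h2 h1 ▸ hy0)
    obtain ⟨i, hi⟩ := hfQ' J ⟨hJne, hJdir, hJlow, hnomax⟩
    obtain ⟨n, q, hq, hqt⟩ := htW
    set m := Nat.pair i n with hm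
    have hnm : n ≤ m := Nat.right_le_pair i n
    set L' := stepP U (fP (Nat.unpair m).1) (S m) with hL'
    have hSm1 : S (m + 1) = stepQ U (fQ (Nat.unpair m).1) L' := rfl
    have hL1 : L'.1 = (S (m + 1)).1 := by rw [hSm1, stepQ_fst]
    have hcond : ∃ y, y ∈ fQ (Nat.unpair m).1 ∧ ∀ p ∈ L'.1, (p, y) ∈ U := by
      rw [hm, Nat.unpair_pair]
      simp only
      rw [hi]
      refine exists_compat_right' hup hin hJne hJdir hJlub _ fun p hp => ?_
      rw [hL1] at hp
      have hq' : q ∈ (S (m + 1)).2 := SS_snd_mono (hnm.trans (Nat.le_succ m)) q hq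
      exact hup (Prod.mk_le_mk.2 ⟨le_rfl, hqt⟩) (SS_inv hab (m + 1) p hp q hq')
    obtain ⟨y, hyJ, hymem⟩ := stepQ_hit hcond
    have hyS : y ∈ (S (m + 1)).2 := by rw [hSm1]; exact hymem
    rw [hm, Nat.unpair_pair] at hyJ
    simp only at hyJ
    rw [hi] at hyJ
    obtain ⟨z, hzd, hyz⟩ := hyJ
    exact ⟨z, hzd, hWup hyz ⟨m + 1, y, hyS, le_rfl⟩⟩

/-- If the sets of non-trivial ideals of the posets `P` and `Q` are both countable, then the
Scott topology on the product poset `P × Q` coincides with the product topology of the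
Scott spaces of `P` and `Q`. -/
theorem scott_prod_eq_prod_scott {P Q : Type*} [PartialOrder P] [PartialOrder Q]
    (hP : {I : Set P | NontrivialIdeal I}.Countable)
    (hQ : {I : Set Q | NontrivialIdeal I}.Countable) :
    Topology.scott (P × Q) Set.univ =
      @instTopologicalSpaceProd P Q (Topology.scott P Set.univ) (Topology.scott Q Set.univ) := by
  letI tP := Topology.scott P Set.univ
  letI tQ := Topology.scott Q Set.univ
  apply TopologicalSpace.ext_iff.2
  intro s
  rw [scottOpen_iff', isOpen_prod_iff]
  constructor
  · rintro ⟨hup, hin⟩ a b hab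
    obtain ⟨V, W, hV, hW, haV, hbW, hVW⟩ := key_lemma hP hQ hup hin hab
    exact ⟨V, W, scottOpen_iff'.2 hV, scottOpen_iff'.2 hW, haV, hbW, hVW⟩
  · intro h
    constructor
    · rintro ⟨a, b⟩ ⟨c, e⟩ hle hab
      obtain ⟨V, W, hV, hW, haV, hbW, hVW⟩ := h a b hab
      obtain ⟨hVup, -⟩ := scottOpen_iff'.1 hV
      obtain ⟨hWup, -⟩ := scottOpen_iff'.1 hW
      exact hVW ⟨hVup hle.1 haV, hWup hle.2 hbW⟩
    · rintro d hd0 hdd ⟨s, t⟩ hlub hst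
      obtain ⟨V, W, hV, hW, hsV, htW, hVW⟩ := h s t hst
      obtain ⟨hVup, hVin⟩ := scottOpen_iff'.1 hV
      obtain ⟨hWup, hWin⟩ := scottOpen_iff'.1 hW
      have h1 : IsLUB (Prod.fst '' d) s ∧ IsLUB (Prod.snd '' d) t := isLUB_prod.1 hlub
      have hdd1 : DirectedOn (· ≤ ·) (Prod.fst '' d) := by
        rintro _ ⟨x, hx, rfl⟩ _ ⟨y, hy, rfl⟩
        obtain ⟨z, hz, hxz, hyz⟩ := hdd x hx y hy
        exact ⟨z.1, ⟨z, hz, rfl⟩, hxz.1, hyz.1⟩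
      have hdd2 : DirectedOn (· ≤ ·) (Prod.snd '' d) := by
        rintro _ ⟨x, hx, rfl⟩ _ ⟨y, hy, rfl⟩
        obtain ⟨z, hz, hxz, hyz⟩ := hdd x hx y hy
        exact ⟨z.2, ⟨z, hz, rfl⟩, hxz.2, hyz.2⟩
      obtain ⟨_, ⟨x, hx, rfl⟩, hxV⟩ := hVin (hd0.image _) hdd1 h1.1 hsV
      obtain ⟨_, ⟨y, hy, rfl⟩, hyW⟩ := hWin (hd0.image _) hdd2 h1.2 htW
      obtain ⟨z, hz, hxz, hyz⟩ := hdd x hx y hy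
      exact ⟨z, hz, hVW ⟨hVup hxz.1 hxV, hWup hyz.2 hyW⟩⟩
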